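/- No imaginary unit i_u of the 2^N-ions with a single-index (i.e., a pure basis unit) is a zero divisor: if i_u · x = 0 for some 2^N-ion x, then x = 0. -/
import Mathlib


noncomputable section

/-- Cayley-Dickson algebra of dimension `2^n` over `ℝ`, as iterated pairs. -/
@[reducible] def CD : ℕ → Type
  | 0 => ℝ
  | n+1 => CD n × CD n

def CDzero : (n : ℕ) → CD n
  | 0 => (0 : ℝ)
  | n+1 => (CDzero n, CDzero n)

def CDadd : (n : ℕ) → CD n → CD n → CD n
  | 0, x, y => ((x + y : ℝ) : CD 0)
  | n+1, x, y => ((CDadd n (x : CD (n+1)).1 (y : CD (n+1)).1,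
      CDadd n (x : CD (n+1)).2 (y : CD (n+1)).2) : CD (n+1))

def CDneg : (n : ℕ) → CD n → CD n
  | 0, x => ((-(x : ℝ) : ℝ) : CD 0)
  | n+1, x => (((CDneg n (x : CD (n+1)).1, CDneg n (x : CD (n+1)).2)) : CD (n+1))

def CDconj : (n : ℕ) → CD n → CD n
  | 0, x => x
  | n+1, x => (((CDconj n (x : CD (n+1)).1, CDneg n (x : CD (n+1)).2)) : CD (n+1))

/-- Cayley-Dickson multiplication: `(a,b)(c,d) = (ac - d* b, d a + b c*)`. -/
def CDmul : (n : ℕ) → CD n → CD n → CD n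
  | 0, x, y => ((x * y : ℝ) : CD 0)
  | n+1, x, y =>
      (((CDadd n (CDmul n (x : CD (n+1)).1 (y : CD (n+1)).1)
          (CDneg n (CDmul n (CDconj n (y : CD (n+1)).2) (x : CD (n+1)).2)),
        CDadd n (CDmul n (y : CD (n+1)).2 (x : CD (n+1)).1)
          (CDmul n (x : CD (n+1)).2 (CDconj n (y : CD (n+1)).1)))) : CD (n+1))

def CDsub (n : ℕ) (x y : CD n) : CD n := CDadd n x (CDneg n y)

def CDsmul : (n : ℕ) → ℝ → CD n → CD n
  | 0, c, x => ((c * x : ℝ) : CD 0)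
  | n+1, c, x => (((CDsmul n c (x : CD (n+1)).1, CDsmul n c (x : CD (n+1)).2)) : CD (n+1))

/-- The imaginary/basis unit `i_k` of the `2^n`-ions (`k < 2^n`); `i_0 = 1`. -/
def CDunit : (n : ℕ) → ℕ → CD n
  | 0, _ => ((1 : ℝ) : CD 0)
  | n+1, k =>
      if k < 2^n then (((CDunit n k, CDzero n)) : CD (n+1))
      else (((CDzero n, CDunit n (k - 2^n))) : CD (n+1))

/-- `(a,b,c)` is an associative triplet in cyclic positive order among the
indices of the `2^n`-ions. -/
def IsCPO (n : ℕ) (a b c : ℕ) : Prop :=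
  CDmul n (CDunit n a) (CDunit n b) = CDunit n c ∧
  CDmul n (CDunit n b) (CDunit n c) = CDunit n a ∧
  CDmul n (CDunit n c) (CDunit n a) = CDunit n b
lemma CDneg_zero : ∀ n : ℕ, CDneg n (CDzero n) = CDzero n
  | 0 => by simp [CDneg, CDzero]
  | n+1 => by simp [CDneg, CDzero, CDneg_zero n]

lemma CDneg_eq_zero : ∀ (n : ℕ) (x : CD n), CDneg n x = CDzero n → x = CDzero n
  | 0, x, h => by simpa [CDneg, CDzero, neg_eq_zero] using h
  | n+1, x, h => by
    rw [show (CDneg (n+1) x : CD (n+1)) = (CDneg n x.1, CDneg n x.2) from rfl,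
      show (CDzero (n+1) : CD (n+1)) = (CDzero n, CDzero n) from rfl, Prod.ext_iff] at h
    exact Prod.ext (CDneg_eq_zero n x.1 h.1) (CDneg_eq_zero n x.2 h.2)

lemma CDconj_zero : ∀ n : ℕ, CDconj n (CDzero n) = CDzero n
  | 0 => rfl
  | n+1 => by simp [CDconj, CDzero, CDconj_zero n, CDneg_zero n]

lemma CDconj_eq_zero : ∀ (n : ℕ) (x : CD n), CDconj n x = CDzero n → x = CDzero n
  | 0, x, h => h
  | n+1, x, h => by
    rw [show (CDconj (n+1) x : CD (n+1)) = (CDconj n x.1, CDneg n x.2) from rfl,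
      show (CDzero (n+1) : CD (n+1)) = (CDzero n, CDzero n) from rfl, Prod.ext_iff] at h
    exact Prod.ext (CDconj_eq_zero n x.1 h.1) (CDneg_eq_zero n x.2 h.2)

lemma CDadd_zero : ∀ (n : ℕ) (x : CD n), CDadd n x (CDzero n) = x
  | 0, x => by simp [CDadd, CDzero]
  | n+1, x => by simp [CDadd, CDzero, CDadd_zero n]

lemma CDzero_add : ∀ (n : ℕ) (x : CD n), CDadd n (CDzero n) x = x
  | 0, x => by simp [CDadd, CDzero]
  | n+1, x => by simp [CDadd, CDzero, CDzero_add n]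

lemma CDmul_zero' : ∀ (n : ℕ) (x : CD n),
    CDmul n x (CDzero n) = CDzero n ∧ CDmul n (CDzero n) x = CDzero n
  | 0, x => by constructor <;> simp [CDmul, CDzero]
  | n+1, x => by
    constructor <;>
      simp [CDmul, CDzero, (CDmul_zero' n _).1, (CDmul_zero' n _).2, CDconj_zero n,
        CDneg_zero n, CDadd_zero n, CDzero_add n]

lemma CDmul_zero (n : ℕ) (x : CD n) : CDmul n x (CDzero n) = CDzero n :=
  (CDmul_zero' n x).1

lemma CDzero_mul (n : ℕ) (x : CD n) : CDmul n (CDzero n) x = CDzero n :=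
  (CDmul_zero' n x).2

lemma CDneg_neg : ∀ (n : ℕ) (x : CD n), CDneg n (CDneg n x) = x
  | 0, x => by simp [CDneg]
  | n+1, x => by simp [CDneg, CDneg_neg n]

lemma CDneg_add : ∀ (n : ℕ) (x y : CD n),
    CDneg n (CDadd n x y) = CDadd n (CDneg n x) (CDneg n y)
  | 0, x, y => by simp [CDneg, CDadd]; ring
  | n+1, x, y => by simp [CDneg, CDadd, CDneg_add n]

lemma CDconj_neg : ∀ (n : ℕ) (x : CD n), CDconj n (CDneg n x) = CDneg n (CDconj n x)
  | 0, x => rfl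
  | n+1, x => by simp [CDconj, CDneg, CDconj_neg n]

lemma CDmul_neg : ∀ (n : ℕ) (x y : CD n),
    CDmul n (CDneg n x) y = CDneg n (CDmul n x y) ∧
    CDmul n x (CDneg n y) = CDneg n (CDmul n x y)
  | 0, x, y => by constructor <;> simp [CDmul, CDneg, neg_mul, mul_neg]
  | n+1, x, y => by
    constructor <;>
    · simp [CDmul, CDneg, CDconj_neg n, (CDmul_neg n _ _).1, (CDmul_neg n _ _).2,
        CDneg_add n, CDneg_neg n]

/-- Conjugate of a basis unit is the unit or its negative. -/
lemma CDconj_unit : ∀ (n : ℕ) (k : ℕ),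
    CDconj n (CDunit n k) = CDunit n k ∨ CDconj n (CDunit n k) = CDneg n (CDunit n k)
  | 0, k => Or.inl rfl
  | n+1, k => by
    by_cases h : k < 2^n
    · rcases CDconj_unit n k with h' | h' <;>
        simp [CDunit, h, CDconj, CDneg, h', CDneg_zero n]
    · simp [CDunit, h, CDconj, CDneg, CDconj_zero n, CDzero, CDneg_zero n]

/-- Main lemma: left and right multiplication by a basis unit are injective. -/
lemma CDunit_regular : ∀ (n : ℕ) (k : ℕ), k < 2^n →
    (∀ x : CD n, CDmul n (CDunit n k) x = CDzero n → x = CDzero n) ∧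
    (∀ x : CD n, CDmul n x (CDunit n k) = CDzero n → x = CDzero n)
  | 0, k, _ => by
    constructor <;> intro x h <;> simpa [CDmul, CDunit, CDzero] using h
  | n+1, k, hk => by
    by_cases h : k < 2^n
    · obtain ⟨hL, hR⟩ := CDunit_regular n k h
      have hRc : ∀ x : CD n, CDmul n x (CDconj n (CDunit n k)) = CDzero n → x = CDzero n := by
        intro x hx
        rcases CDconj_unit n k with h' | h'
        · exact hR x (h' ▸ hx)
        · rw [h', (CDmul_neg n x (CDunit n k)).2] at hx
          exact hR x (CDneg_eq_zero n _ hx)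
      constructor <;> intro x hx <;>
      · rw [show (CDunit (n+1) k : CD (n+1)) = (CDunit n k, CDzero n) by
            simp [CDunit, h]] at hx
        rw [show (CDzero (n+1) : CD (n+1)) = (CDzero n, CDzero n) from rfl] at hx ⊢
        rw [show (CDmul (n+1) : CD (n+1) → CD (n+1) → CD (n+1)) = fun a b =>
            (CDadd n (CDmul n a.1 b.1) (CDneg n (CDmul n (CDconj n b.2) a.2)),
             CDadd n (CDmul n b.2 a.1) (CDmul n a.2 (CDconj n b.1))) from rfl] at hx
        simp only [CDconj_zero n, CDzero_mul n, CDmul_zero n, CDneg_zero n,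
          CDadd_zero n, CDzero_add n, Prod.ext_iff] at hx
        first
        | exact Prod.ext (hL x.1 hx.1) (hR x.2 hx.2)
        | exact Prod.ext (hR x.1 hx.1) (hRc x.2 hx.2)
    · have h2 : k - 2^n < 2^n := by
        have := hk
        rw [pow_succ] at this
        omega
      obtain ⟨hL, hR⟩ := CDunit_regular n (k - 2^n) h2
      have hLc : ∀ x : CD n, CDmul n (CDconj n (CDunit n (k - 2^n))) x = CDzero n →
          x = CDzero n := by
        intro x hx
        rcases CDconj_unit n (k - 2^n) with h' | h'
        · exact hL x (h' ▸ hx)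
        · rw [h', (CDmul_neg n (CDunit n (k - 2^n)) x).1] at hx
          exact hL x (CDneg_eq_zero n _ hx)
      constructor <;> intro x hx <;>
      · rw [show (CDunit (n+1) k : CD (n+1)) = (CDzero n, CDunit n (k - 2^n)) by
            simp [CDunit, h]] at hx
        rw [show (CDzero (n+1) : CD (n+1)) = (CDzero n, CDzero n) from rfl] at hx ⊢
        rw [show (CDmul (n+1) : CD (n+1) → CD (n+1) → CD (n+1)) = fun a b =>
            (CDadd n (CDmul n a.1 b.1) (CDneg n (CDmul n (CDconj n b.2) a.2)),
             CDadd n (CDmul n b.2 a.1) (CDmul n a.2 (CDconj n b.1))) from rfl] at hx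
        simp only [CDconj_zero n, CDzero_mul n, CDmul_zero n, CDneg_zero n,
          CDadd_zero n, CDzero_add n, Prod.ext_iff] at hx
        first
        | exact Prod.ext (CDconj_eq_zero n _ (hL _ hx.2))
            (CDconj_eq_zero n _ (hR _ (CDneg_eq_zero n _ hx.1)))
        | exact Prod.ext (hL x.1 hx.2) (hLc x.2 (CDneg_eq_zero n _ hx.1))

/-- No pure basis unit `i_u` of the `2^N`-ions is a zero divisor: if
`i_u · x = 0` then `x = 0`. -/
theorem basis_unit_not_zero_divisor (N u : ℕ) (hu : u < 2 ^ N) :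
    ∀ x : CD N, CDmul N (CDunit N u) x = CDzero N → x = CDzero N := by
  exact (CDunit_regular N u hu).1

end
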